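/- arXiv:1810.10214 — 2 statements merged into one kernel-verified Lean document; each statement's English description precedes it below -/
import Mathlib

section
/- Let Γ = (κ_{ij}) be an m × m symmetric positive semidefinite matrix with unit diagonal, and let p_ν be a unit eigenvector of Γ with eigenvalue ℓ_ν, ℓ₁ being the largest eigenvalue of Γ. Then the strict inequality Σ_{i,j} (p_{ν,i} κ_{ij} p_{ν,j})² < 2 ℓ_ν Σ_i p_{ν,i}⁴ (equivalently, Δ_ν = 2 ℓ_ν Σ_i p_{ν,i}⁴ − Σ_{i,j} (p_{ν,i} κ_{ij} p_{ν,j})² > 0) holds in each of the following cases: (i) all entries of Γ and all entries of p_ν are non-negative; (ii) 2 ℓ_ν Σ_i p_{ν,i}⁴ > 1; (iii) 2 ℓ_ν > ℓ₁². -/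
open Matrix

section Aux

variable {m : ℕ}

private lemma varred_sym {Γ : Matrix (Fin m) (Fin m) ℝ} (hpsd : Γ.PosSemidef)
    (a b : Fin m) : Γ a b = Γ b a := by
  have := congrFun (congrFun hpsd.1 b) a; simpa using this

private lemma varred_entry_sq_le_one {Γ : Matrix (Fin m) (Fin m) ℝ}
    (hpsd : Γ.PosSemidef) (hdiag : ∀ i, Γ i i = 1) (i j : Fin m) : (Γ i j) ^ 2 ≤ 1 := by
  rcases eq_or_ne i j with rfl | hij
  · rw [hdiag]; norm_num
  · have hsym : Γ j i = Γ i j := varred_sym hpsd j i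
    have key : ∀ t : ℝ, 0 ≤ 1 * (t * t) + (2 * Γ i j) * t + 1 := by
      intro t
      have h := hpsd.dotProduct_mulVec_nonneg (fun k => (if k = i then t else 0) + (if k = j then 1 else 0))
      simp only [star_trivial, dotProduct, mulVec] at h
      simp only [mul_ite, mul_one, mul_zero, Finset.mul_sum, add_mul, mul_add,
        Finset.sum_add_distrib, ite_mul, zero_mul, one_mul,
        Finset.sum_ite_eq', Finset.mem_univ, if_true] at h
      rw [hdiag, hdiag, hsym] at h
      nlinarith [h]
    have := discrim_le_zero key
    rw [discrim] at this
    nlinarith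

private lemma varred_shift_psd {Γ : Matrix (Fin m) (Fin m) ℝ} (hpsd : Γ.PosSemidef)
    (ℓ1 : ℝ) (hℓ1max : ∀ (μ : ℝ) (w : Fin m → ℝ), w ≠ 0 → Γ.mulVec w = μ • w → μ ≤ ℓ1) :
    (ℓ1 • (1 : Matrix (Fin m) (Fin m) ℝ) - Γ).PosSemidef := by
  have hBH : (ℓ1 • (1 : Matrix (Fin m) (Fin m) ℝ) - Γ).IsHermitian := by
    simp [Matrix.IsHermitian, conjTranspose_sub, conjTranspose_smul,
      show Γᵀ = Γ from hpsd.1]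
  apply hBH.posSemidef_iff_eigenvalues_nonneg.mpr
  intro i
  show (0:ℝ) ≤ _
  have hv := hBH.mulVec_eigenvectorBasis i
  set v : Fin m → ℝ := ⇑(hBH.eigenvectorBasis i) with hvdef
  have hvne : v ≠ 0 := by
    intro h
    exact hBH.eigenvectorBasis.orthonormal.ne_zero i (by ext k; exact congrFun h k)
  rw [sub_mulVec, smul_mulVec, one_mulVec, sub_eq_iff_eq_add] at hv
  have hΓv : Γ *ᵥ v = (ℓ1 - hBH.eigenvalues i) • v := by
    have h2 : Γ *ᵥ v = ℓ1 • v - hBH.eigenvalues i • v := by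
      rw [eq_sub_iff_add_eq, add_comm]; exact hv.symm
    rw [h2, ← sub_smul]
  have := hℓ1max _ v hvne hΓv
  linarith

open scoped MatrixOrder in
private lemma varred_shift_sq_psd {Γ : Matrix (Fin m) (Fin m) ℝ} (hpsd : Γ.PosSemidef)
    {ℓ1 : ℝ} (hB : (ℓ1 • (1 : Matrix (Fin m) (Fin m) ℝ) - Γ).PosSemidef) :
    (ℓ1 • Γ - Γ * Γ).PosSemidef := by
  obtain ⟨R, hRH, hRR, hC⟩ : ∃ R : Matrix (Fin m) (Fin m) ℝ, Rᴴ = R ∧ R * R = Γ ∧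
      (R * (ℓ1 • (1 : Matrix (Fin m) (Fin m) ℝ) - Γ) * Rᴴ).PosSemidef :=
    ⟨CFC.sqrt Γ, (CFC.sqrt_nonneg Γ).posSemidef.1, CFC.sqrt_mul_sqrt_self Γ hpsd.nonneg,
      hB.mul_mul_conjTranspose_same _⟩
  rw [hRH] at hC
  have heq : R * (ℓ1 • (1 : Matrix (Fin m) (Fin m) ℝ) - Γ) * R = ℓ1 • Γ - Γ * Γ := by
    rw [mul_sub, sub_mul, mul_smul_comm, mul_one, smul_mul_assoc, hRR]
    congr 1
    rw [← hRR]
    simp only [Matrix.mul_assoc]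
  rwa [heq] at hC

private lemma varred_diag_nonneg {M : Matrix (Fin m) (Fin m) ℝ} (hM : M.PosSemidef)
    (i : Fin m) : 0 ≤ M i i := by
  have h := hM.dotProduct_mulVec_nonneg (Pi.single i 1)
  simpa [dotProduct, mulVec, Pi.single_apply] using h

end Aux

/-- **Variance-reduction condition (24)**: let `Γ = (κ_{ij})` be an `m × m` correlation
matrix (symmetric positive semidefinite with unit diagonal) and `p_ν` a unit eigenvector
with eigenvalue `ℓ_ν`, `ℓ₁` being the largest eigenvalue of `Γ`. Then
`∑_{i,j} (p_{ν,i} κ_{ij} p_{ν,j})² < 2 ℓ_ν ∑_i p_{ν,i}⁴` (equivalently `Δ_ν > 0`)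
holds in each of the following cases:
(i) all entries of `Γ` and of `p_ν` are non-negative;
(ii) `2 ℓ_ν ∑_i p_{ν,i}⁴ > 1`;
(iii) `2 ℓ_ν > ℓ₁²`. -/
theorem variance_reduction_condition
    {m : ℕ} (Γ : Matrix (Fin m) (Fin m) ℝ)
    (hpsd : Γ.PosSemidef) (hdiag : ∀ i, Γ i i = 1)
    (pν : Fin m → ℝ) (ℓν : ℝ)
    (hunit : ∑ i, (pν i) ^ 2 = 1)
    (heig : Γ.mulVec pν = ℓν • pν)
    (ℓ1 : ℝ)
    (hℓ1max : ∀ (μ : ℝ) (w : Fin m → ℝ), w ≠ 0 → Γ.mulVec w = μ • w → μ ≤ ℓ1)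
    (hℓ1eig : ∃ w : Fin m → ℝ, w ≠ 0 ∧ Γ.mulVec w = ℓ1 • w)
    (hcase :
      ((∀ i j, 0 ≤ Γ i j) ∧ (∀ i, 0 ≤ pν i))
        ∨ 1 < 2 * ℓν * ∑ i, (pν i) ^ 4
        ∨ ℓ1 ^ 2 < 2 * ℓν) :
    ∑ i, ∑ j, (pν i * Γ i j * pν j) ^ 2 < 2 * ℓν * ∑ i, (pν i) ^ 4 := by
  classical
  have hsym : ∀ a b, Γ a b = Γ b a := varred_sym hpsd
  have heigsum : ∀ i, ∑ j, Γ i j * pν j = ℓν * pν i := by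
    intro i
    have := congrFun heig i
    simpa [mulVec, dotProduct] using this
  have hκ : ∀ i j, (Γ i j) ^ 2 ≤ 1 := varred_entry_sq_le_one hpsd hdiag
  -- some index with nonzero entry, and positivity of ∑ pν⁴
  obtain ⟨i0, hi0⟩ : ∃ i, pν i ≠ 0 := by
    by_contra h
    push_neg at h
    rw [Finset.sum_eq_zero (fun i _ => by rw [h i]; ring)] at hunit
    norm_num at hunit
  have hp4 : 0 < ∑ i, pν i ^ 4 := by
    have h1 : 0 < pν i0 ^ 4 := by positivity
    exact Finset.sum_pos' (fun i _ => by positivity) ⟨i0, Finset.mem_univ _, h1⟩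
  -- the key identity pieces
  have hA : ∑ i, ∑ j, (pν i * Γ i j * pν j) * pν i ^ 2 = ℓν * ∑ i, pν i ^ 4 := by
    rw [Finset.mul_sum]
    refine Finset.sum_congr rfl fun i _ => ?_
    have h2 : ∑ j, (pν i * Γ i j * pν j) * pν i ^ 2 = pν i ^ 3 * ∑ j, Γ i j * pν j := by
      rw [Finset.mul_sum]; exact Finset.sum_congr rfl fun j _ => by ring
    rw [h2, heigsum i]; ring
  have hB2 : ∑ i, ∑ j, (pν i * Γ i j * pν j) * pν j ^ 2 = ℓν * ∑ i, pν i ^ 4 := by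
    rw [← hA, Finset.sum_comm]
    exact Finset.sum_congr rfl fun j _ => Finset.sum_congr rfl fun i _ => by
      rw [hsym j i]; ring
  rcases hcase with ⟨hΓ, hp⟩ | hcase2 | hcase3
  · -- case (i): all entries nonnegative
    have hκle : ∀ i j, Γ i j ≤ 1 := fun i j => by nlinarith [hκ i j, hΓ i j]
    have hterm : ∀ i j, 0 ≤ pν i * Γ i j * pν j := fun i j =>
      mul_nonneg (mul_nonneg (hp i) (hΓ i j)) (hp j)
    have hq : ℓν = ∑ i, ∑ j, pν i * Γ i j * pν j := by
      have h1 : ∑ i, ∑ j, pν i * Γ i j * pν j = ∑ i, pν i ^ 2 * ℓν := by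
        refine Finset.sum_congr rfl fun i _ => ?_
        have h2 : ∑ j, pν i * Γ i j * pν j = pν i * ∑ j, Γ i j * pν j := by
          rw [Finset.mul_sum]; exact Finset.sum_congr rfl fun j _ => by ring
        rw [h2, heigsum i]; ring
      rw [h1, ← Finset.sum_mul, hunit, one_mul]
    have hℓν1 : 1 ≤ ℓν := by
      have hdiagsum : ∀ i : Fin m, pν i ^ 2 ≤ ∑ j, pν i * Γ i j * pν j := fun i => by
        have h3 := Finset.single_le_sum (f := fun j => pν i * Γ i j * pν j)
          (fun j _ => hterm i j) (Finset.mem_univ i)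
        calc pν i ^ 2 = pν i * Γ i i * pν i := by rw [hdiag]; ring
          _ ≤ _ := h3
      calc (1 : ℝ) = ∑ i, pν i ^ 2 := hunit.symm
        _ ≤ ∑ i, ∑ j, pν i * Γ i j * pν j := Finset.sum_le_sum fun i _ => hdiagsum i
        _ = ℓν := hq.symm
    have hterm2 : ∀ i j, (pν i * Γ i j * pν j) ^ 2 ≤
        (pν i * Γ i j * pν j) * (pν i ^ 2 + pν j ^ 2) / 2 := by
      intro i j
      have ha := hterm i j
      have hb : pν i * Γ i j * pν j ≤ (pν i ^ 2 + pν j ^ 2) / 2 := by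
        nlinarith [hκle i j, hp i, hp j, sq_nonneg (pν i - pν j), hΓ i j,
          mul_nonneg (hp i) (hp j)]
      nlinarith [ha, hb]
    have hsplit : ∑ i, ∑ j, (pν i * Γ i j * pν j) * (pν i ^ 2 + pν j ^ 2) / 2
        = ℓν * ∑ i, pν i ^ 4 := by
      have h4 : ∀ i j : Fin m, (pν i * Γ i j * pν j) * (pν i ^ 2 + pν j ^ 2) / 2 =
          ((pν i * Γ i j * pν j) * pν i ^ 2) / 2 +
          ((pν i * Γ i j * pν j) * pν j ^ 2) / 2 := fun i j => by ring
      simp_rw [h4, Finset.sum_add_distrib, ← Finset.sum_div]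
      rw [hA, hB2]; ring
    have hle : ∑ i, ∑ j, (pν i * Γ i j * pν j) ^ 2 ≤ ℓν * ∑ i, pν i ^ 4 := by
      rw [← hsplit]
      exact Finset.sum_le_sum fun i _ => Finset.sum_le_sum fun j _ => hterm2 i j
    nlinarith [hle, hp4, hℓν1]
  · -- case (ii)
    have hS1 : ∑ i, ∑ j, (pν i * Γ i j * pν j) ^ 2 ≤ 1 := by
      have h5 : ∀ i j, (pν i * Γ i j * pν j) ^ 2 ≤ pν i ^ 2 * pν j ^ 2 := fun i j => by
        nlinarith [hκ i j, sq_nonneg (pν i * pν j)]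
      calc ∑ i, ∑ j, (pν i * Γ i j * pν j) ^ 2
          ≤ ∑ i : Fin m, ∑ j : Fin m, pν i ^ 2 * pν j ^ 2 :=
            Finset.sum_le_sum fun i _ => Finset.sum_le_sum fun j _ => h5 i j
        _ = (∑ i, pν i ^ 2) * (∑ j, pν j ^ 2) := by
            rw [Finset.sum_mul_sum]
        _ = 1 := by rw [hunit]; ring
    linarith
  · -- case (iii)
    have hB := varred_shift_psd hpsd ℓ1 hℓ1max
    have hC := varred_shift_sq_psd hpsd hB
    have hℓ1ge1 : 1 ≤ ℓ1 := by
      have h6 := varred_diag_nonneg hB i0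
      have h7 : (ℓ1 • (1 : Matrix (Fin m) (Fin m) ℝ) - Γ) i0 i0 = ℓ1 - 1 := by
        simp [Matrix.sub_apply, Matrix.smul_apply, Matrix.one_apply, hdiag]
      rw [h7] at h6; linarith
    have hGG : ∀ i, ∑ j, (Γ i j) ^ 2 ≤ ℓ1 := by
      intro i
      have h6 := varred_diag_nonneg hC i
      have h7 : (ℓ1 • Γ - Γ * Γ) i i = ℓ1 * Γ i i - ∑ j, (Γ i j) ^ 2 := by
        simp only [Matrix.sub_apply, Matrix.smul_apply, smul_eq_mul, Matrix.mul_apply]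
        congr 1
        exact Finset.sum_congr rfl fun j _ => by rw [hsym j i]; ring
      rw [h7, hdiag] at h6; linarith
    have hterm3 : ∀ i j, (pν i * Γ i j * pν j) ^ 2 ≤
        (Γ i j) ^ 2 * (pν i ^ 4 + pν j ^ 4) / 2 := fun i j => by
      nlinarith [sq_nonneg (Γ i j * (pν i ^ 2 - pν j ^ 2))]
    have hswap : ∑ i, ∑ j, (Γ i j) ^ 2 * pν j ^ 4 = ∑ i, ∑ j, (Γ i j) ^ 2 * pν i ^ 4 := by
      rw [Finset.sum_comm]
      exact Finset.sum_congr rfl fun j _ => Finset.sum_congr rfl fun i _ => by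
        rw [hsym j i]
    have hsplit2 : ∑ i, ∑ j, (Γ i j) ^ 2 * (pν i ^ 4 + pν j ^ 4) / 2
        = ∑ i, pν i ^ 4 * ∑ j, (Γ i j) ^ 2 := by
      have h8 : ∀ i j : Fin m, (Γ i j) ^ 2 * (pν i ^ 4 + pν j ^ 4) / 2 =
          ((Γ i j) ^ 2 * pν i ^ 4) / 2 + ((Γ i j) ^ 2 * pν j ^ 4) / 2 := fun i j => by ring
      simp_rw [h8, Finset.sum_add_distrib, ← Finset.sum_div]
      rw [hswap, ← add_div, add_self_div_two]
      rw [show ∑ i, ∑ j, (Γ i j) ^ 2 * pν i ^ 4 = ∑ i, pν i ^ 4 * ∑ j, (Γ i j) ^ 2 from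
        Finset.sum_congr rfl fun i _ => by
          rw [Finset.mul_sum]; exact Finset.sum_congr rfl fun j _ => by ring]
    have hle2 : ∑ i, ∑ j, (pν i * Γ i j * pν j) ^ 2 ≤ ℓ1 * ∑ i, pν i ^ 4 := by
      calc ∑ i, ∑ j, (pν i * Γ i j * pν j) ^ 2
          ≤ ∑ i, ∑ j, (Γ i j) ^ 2 * (pν i ^ 4 + pν j ^ 4) / 2 :=
            Finset.sum_le_sum fun i _ => Finset.sum_le_sum fun j _ => hterm3 i j
        _ = ∑ i, pν i ^ 4 * ∑ j, (Γ i j) ^ 2 := hsplit2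
        _ ≤ ∑ i, pν i ^ 4 * ℓ1 := Finset.sum_le_sum fun i _ =>
            mul_le_mul_of_nonneg_left (hGG i) (by positivity)
        _ = ℓ1 * ∑ i, pν i ^ 4 := by rw [← Finset.sum_mul]; ring
    have h9 : ℓ1 < 2 * ℓν := by nlinarith
    have h10 : ℓ1 * ∑ i, pν i ^ 4 < 2 * ℓν * ∑ i, pν i ^ 4 :=
      mul_lt_mul_of_pos_right h9 hp4
    linarith
end

section
/- Let ξ̄ ∈ ℝ^m be a centered Gaussian random vector with unit variances and covariance (correlation) matrix Γ = (κ_{ij}), and let p_ν be a unit eigenvector of Γ with eigenvalue ℓ_ν. With ψ_{ij} = κ_{ij}(ξ̄_i² + ξ̄_j²)/2 and χ_{ij} = ξ̄_i ξ̄_j, define κ̌₁_{iji'j'} = Cov(ψ_{ij}, ψ_{i'j'}) and κ̌₂_{iji'j'} = Cov(ψ_{ij}, χ_{i'j'}). Then [𝒫^ν, κ̌₁] = 2 ℓ_ν² tr (P_{D,ν} Γ P_{D,ν})² and [𝒫^ν, κ̌₂] = 2 ℓ_ν³ tr P_{D,ν}⁴, so that [𝒫^ν, κ̌] = [𝒫^ν,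 κ̌₁] − 2 [𝒫^ν, κ̌₂] = 2 ℓ_ν² tr (P_{D,ν} Γ P_{D,ν})² − 4 ℓ_ν³ tr P_{D,ν}⁴, where P_{D,ν} = diag(p_{ν,1}, …, p_{ν,m}). -/
open MeasureTheory ProbabilityTheory Matrix
open scoped NNReal ENNReal

set_option linter.unusedSectionVars false
set_option maxHeartbeats 2000000

/-! ### Auxiliary lemmas -/

lemma aux_abs_mul4 (a b c d : ℝ) :
    |a * b * (c * d)| ≤ (a ^ 4 + b ^ 4 + c ^ 4 + d ^ 4) / 4 := by
  have h1 : |a * b * (c * d)| = |a * b| * |c * d| := by rw [abs_mul]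
  have h2 : |a * b| ≤ (a ^ 2 + b ^ 2) / 2 := by
    rw [abs_mul]
    nlinarith [sq_nonneg (|a| - |b|), sq_abs a, sq_abs b, abs_nonneg a, abs_nonneg b]
  have h3 : |c * d| ≤ (c ^ 2 + d ^ 2) / 2 := by
    rw [abs_mul]
    nlinarith [sq_nonneg (|c| - |d|), sq_abs c, sq_abs d, abs_nonneg c, abs_nonneg d]
  have h4 : |a * b| * |c * d| ≤ ((a ^ 2 + b ^ 2) / 2) * ((c ^ 2 + d ^ 2) / 2) :=
    mul_le_mul h2 h3 (abs_nonneg _) (by positivity)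
  nlinarith [sq_nonneg (a^2 - c^2), sq_nonneg (a^2 - d^2), sq_nonneg (b^2 - c^2),
    sq_nonneg (b^2 - d^2), sq_nonneg (a^2+b^2), sq_nonneg (c^2+d^2)]

lemma aux_amgm4 {α : Type*} [MeasurableSpace α] {μ : Measure α}
    {f g h k : α → ℝ} (hf : Measurable f) (hg : Measurable g) (hh : Measurable h)
    (hk : Measurable k)
    (hf4 : Integrable (fun x => (f x) ^ 4) μ) (hg4 : Integrable (fun x => (g x) ^ 4) μ)
    (hh4 : Integrable (fun x => (h x) ^ 4) μ) (hk4 : Integrable (fun x => (k x) ^ 4) μ) :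
    Integrable (fun x => (f x * g x) * (h x * k x)) μ := by
  have hbound : Integrable (fun x => ((f x)^4 + (g x)^4 + (h x)^4 + (k x)^4) / 4) μ :=
    (((hf4.add hg4).add hh4).add hk4).div_const 4
  refine hbound.mono ?_ (Filter.Eventually.of_forall fun x => ?_)
  · exact ((hf.mul hg).mul (hh.mul hk)).aestronglyMeasurable
  · rw [Real.norm_eq_abs, Real.norm_eq_abs]
    refine (aux_abs_mul4 _ _ _ _).trans ?_
    exact le_abs_self _

lemma aux_int_x4_exp {b : ℝ} (hb : 0 < b) :
    Integrable (fun x : ℝ => x ^ 4 * Real.exp (-b * x ^ 2)) := by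
  have h := integrable_rpow_mul_exp_neg_mul_sq hb (by norm_num : (-1:ℝ) < 4)
  refine h.congr (Filter.Eventually.of_forall fun x => ?_)
  norm_cast

lemma aux_val_x4_exp {b : ℝ} (hb : 0 < b) :
    ∫ x : ℝ, x ^ 4 * Real.exp (-b * x ^ 2)
      = b ^ (-(5:ℝ)/2) * (3/4) * Real.sqrt Real.pi := by
  have heven : (fun x : ℝ => x ^ 4 * Real.exp (-b * x ^ 2))
      = fun x : ℝ => |x| ^ 4 * Real.exp (-b * |x| ^ 2) := by
    funext x
    rw [sq_abs, ← abs_pow, abs_of_nonneg (by positivity : (0:ℝ) ≤ x ^ 4)]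
  rw [heven, integral_comp_abs (f := fun x : ℝ => x ^ 4 * Real.exp (-b * x ^ 2))]
  have h1 : ∫ x in Set.Ioi (0:ℝ), x ^ 4 * Real.exp (-b * x ^ 2)
      = ∫ x in Set.Ioi (0:ℝ), x ^ (4:ℝ) * Real.exp (-b * x ^ (2:ℝ)) := by
    refine setIntegral_congr_fun measurableSet_Ioi fun x _ => ?_
    norm_cast
  rw [h1, integral_rpow_mul_exp_neg_mul_rpow (by norm_num) (by norm_num) hb]
  have h32 : ((3:ℝ)/2) ≠ 0 := by norm_num
  have h12 : ((1:ℝ)/2) ≠ 0 := by norm_num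
  have hG : Real.Gamma (((4:ℝ)+1)/2) = (3/2) * ((1/2) * Real.sqrt Real.pi) := by
    have e1 : ((4:ℝ)+1)/2 = (3:ℝ)/2 + 1 := by norm_num
    have e2 : (3:ℝ)/2 = (1:ℝ)/2 + 1 := by norm_num
    rw [e1, Real.Gamma_add_one h32, e2, Real.Gamma_add_one h12, Real.Gamma_one_half_eq, ← e2]
  rw [hG]
  have e3 : (-((4:ℝ)+1))/2 = -(5:ℝ)/2 := by norm_num
  rw [e3]
  ring

lemma aux_gauss_int4 (V : ℝ≥0) :
    Integrable (fun x : ℝ => x ^ 4) (gaussianReal 0 V) := by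
  rcases eq_or_ne V 0 with hV | hV
  · subst hV
    rw [gaussianReal_zero_var]
    constructor
    · exact (measurable_id.pow_const 4).aestronglyMeasurable
    · show (∫⁻ x, ‖x ^ 4‖ₑ ∂(Measure.dirac (0:ℝ))) < ⊤
      rw [lintegral_dirac' _ (measurable_id'.pow_const 4).enorm]
      simp
  · have hVpos : (0:ℝ) < V := NNReal.coe_pos.mpr (pos_iff_ne_zero.mpr hV)
    have hb : (0:ℝ) < (2 * (V:ℝ))⁻¹ := by positivity
    rw [gaussianReal_of_var_ne_zero 0 hV]
    rw [integrable_withDensity_iff (measurable_gaussianPDF 0 V)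
      (Filter.Eventually.of_forall fun x => ENNReal.ofReal_lt_top)]
    have hfun : (fun x : ℝ => x ^ 4 * ((gaussianPDF 0 V x).toReal))
        = fun x : ℝ => (Real.sqrt (2 * Real.pi * V))⁻¹
            * (x ^ 4 * Real.exp (-(2 * (V:ℝ))⁻¹ * x ^ 2)) := by
      funext x
      rw [gaussianPDF, ENNReal.toReal_ofReal (gaussianPDFReal_nonneg 0 V x), gaussianPDFReal]
      rw [show -(x - 0) ^ 2 / (2 * (V:ℝ)) = -(2 * (V:ℝ))⁻¹ * x ^ 2 by field_simp; ring]
      ring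
    rw [hfun]
    exact (aux_int_x4_exp hb).const_mul _

lemma aux_gauss_mom4 (V : ℝ≥0) :
    ∫ x : ℝ, x ^ 4 ∂(gaussianReal 0 V) = 3 * (V:ℝ) ^ 2 := by
  rcases eq_or_ne V 0 with hV | hV
  · subst hV
    rw [gaussianReal_zero_var, integral_dirac]
    norm_num
  · have hVpos : (0:ℝ) < V := NNReal.coe_pos.mpr (pos_iff_ne_zero.mpr hV)
    have hb : (0:ℝ) < (2 * (V:ℝ))⁻¹ := by positivity
    have h2V : (0:ℝ) < 2 * (V:ℝ) := by positivity
    rw [gaussianReal_of_var_ne_zero 0 hV]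
    have hd : (volume : Measure ℝ).withDensity (gaussianPDF 0 V)
        = (volume : Measure ℝ).withDensity
            (fun x => ((Real.toNNReal (gaussianPDFReal 0 V x) : ℝ≥0) : ℝ≥0∞)) := rfl
    rw [hd, integral_withDensity_eq_integral_smul
      ((measurable_gaussianPDFReal 0 V).real_toNNReal) (fun x => x ^ 4)]
    have hfun : (fun x : ℝ => (Real.toNNReal (gaussianPDFReal 0 V x)) • x ^ 4)
        = fun x : ℝ => (Real.sqrt (2 * Real.pi * V))⁻¹
            * (x ^ 4 * Real.exp (-(2 * (V:ℝ))⁻¹ * x ^ 2)) := by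
      funext x
      rw [NNReal.smul_def, smul_eq_mul, Real.coe_toNNReal _ (gaussianPDFReal_nonneg 0 V x),
        gaussianPDFReal]
      rw [show -(x - 0) ^ 2 / (2 * (V:ℝ)) = -(2 * (V:ℝ))⁻¹ * x ^ 2 by field_simp; ring]
      ring
    rw [hfun, integral_const_mul, aux_val_x4_exp hb]
    have hrw : ((2 * (V:ℝ))⁻¹) ^ (-(5:ℝ)/2)
        = (2 * (V:ℝ)) ^ 2 * Real.sqrt (2 * (V:ℝ)) := by
      rw [← Real.rpow_neg_one (2 * (V:ℝ)), ← Real.rpow_mul h2V.le]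
      rw [show (-1 * (-(5:ℝ)/2)) = 2 + 1/2 by norm_num, Real.rpow_add h2V, Real.sqrt_eq_rpow]
      congr 1
      rw [show ((2:ℝ)) = ((2:ℕ):ℝ) by norm_num, Real.rpow_natCast]
    rw [hrw]
    have hsq : Real.sqrt (2 * Real.pi * (V:ℝ))
        = Real.sqrt Real.pi * Real.sqrt (2 * (V:ℝ)) := by
      rw [show 2 * Real.pi * (V:ℝ) = Real.pi * (2 * (V:ℝ)) by ring,
        Real.sqrt_mul Real.pi_pos.le]
    rw [hsq]
    have hπ : Real.sqrt Real.pi ≠ 0 := by positivity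
    have hs2V : Real.sqrt (2 * (V:ℝ)) ≠ 0 := by positivity
    field_simp
    ring

lemma aux_meas_L {m : ℕ} (c : Fin m → ℝ) :
    Measurable (fun v : Fin m → ℝ => ∑ i, c i * v i) :=
  Finset.measurable_sum _ fun i _ => (measurable_pi_apply i).const_mul _

lemma aux_sum_delta {m : ℕ} (a : Fin m) (f : Fin m → ℝ) :
    ∑ i, (if i = a then (1:ℝ) else 0) * f i = f a := by
  simp [ite_mul]

section AuxProb

variable {m : ℕ} (μ : Measure (Fin m → ℝ)) [IsProbabilityMeasure μ]
  (Γ : Matrix (Fin m) (Fin m) ℝ)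

lemma aux_L4_int
    (hGauss : ∀ c : Fin m → ℝ,
      μ.map (fun v => ∑ i, c i * v i)
        = gaussianReal 0 (Real.toNNReal (∑ i, ∑ j, c i * Γ i j * c j)))
    (c : Fin m → ℝ) :
    Integrable (fun v => (∑ i, c i * v i) ^ 4) μ := by
  have h2 : Integrable (fun x : ℝ => x ^ 4)
      (μ.map (fun v => ∑ i, c i * v i)) := by
    rw [hGauss c]; exact aux_gauss_int4 _
  have h3 := (integrable_map_measure
      (by exact (measurable_id.pow_const 4).aestronglyMeasurable)
      (aux_meas_L c).aemeasurable).mp h2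
  exact h3

lemma aux_coord4_int
    (hGauss : ∀ c : Fin m → ℝ,
      μ.map (fun v => ∑ i, c i * v i)
        = gaussianReal 0 (Real.toNNReal (∑ i, ∑ j, c i * Γ i j * c j)))
    (a : Fin m) :
    Integrable (fun v => (v a) ^ 4) μ := by
  have h := aux_L4_int μ Γ hGauss (fun i => if i = a then 1 else 0)
  have e : (fun v : Fin m → ℝ => (∑ i, (if i = a then (1:ℝ) else 0) * v i) ^ 4)
      = fun v => (v a) ^ 4 := by
    funext v; rw [aux_sum_delta]
  rwa [e] at h

lemma aux_I4 (hGauss : ∀ c : Fin m → ℝ,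
      μ.map (fun v => ∑ i, c i * v i)
        = gaussianReal 0 (Real.toNNReal (∑ i, ∑ j, c i * Γ i j * c j)))
    (a b c d : Fin m) :
    Integrable (fun v => (v a * v b) * (v c * v d)) μ :=
  aux_amgm4 (measurable_pi_apply a) (measurable_pi_apply b) (measurable_pi_apply c)
    (measurable_pi_apply d) (aux_coord4_int μ Γ hGauss a) (aux_coord4_int μ Γ hGauss b)
    (aux_coord4_int μ Γ hGauss c) (aux_coord4_int μ Γ hGauss d)

lemma aux_I2 (hGauss : ∀ c : Fin m → ℝ,
      μ.map (fun v => ∑ i, c i * v i)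
        = gaussianReal 0 (Real.toNNReal (∑ i, ∑ j, c i * Γ i j * c j)))
    (a b : Fin m) :
    Integrable (fun v => v a * v b) μ := by
  have h := aux_amgm4 (μ := μ) (measurable_pi_apply a) (measurable_pi_apply b)
    (measurable_const (a := (1:ℝ))) (measurable_const (a := (1:ℝ)))
    (aux_coord4_int μ Γ hGauss a) (aux_coord4_int μ Γ hGauss b)
    (by simpa using integrable_const (μ := μ) (1:ℝ))
    (by simpa using integrable_const (μ := μ) (1:ℝ))
  simpa using h

lemma aux_symm (hcov : ∀ i j, (∫ v, v i * v j ∂μ) = Γ i j) (a b : Fin m) :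
    Γ a b = Γ b a := by
  rw [← hcov a b, ← hcov b a]
  have e : (fun v : Fin m → ℝ => v a * v b) = fun v => v b * v a :=
    funext fun v => mul_comm _ _
  rw [e]

lemma aux_B (hcov : ∀ i j, (∫ v, v i * v j ∂μ) = Γ i j)
    (hGauss : ∀ c : Fin m → ℝ,
      μ.map (fun v => ∑ i, c i * v i)
        = gaussianReal 0 (Real.toNNReal (∑ i, ∑ j, c i * Γ i j * c j)))
    (c d : Fin m → ℝ) :
    ∫ v, (∑ i, c i * v i) * (∑ j, d j * v j) ∂μ = ∑ i, ∑ j, c i * Γ i j * d j := by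
  have hpt : (fun v : Fin m → ℝ => (∑ i, c i * v i) * (∑ j, d j * v j))
      = fun v => ∑ i, ∑ j, (c i * d j) * (v i * v j) := by
    funext v
    rw [Finset.sum_mul_sum]
    exact Finset.sum_congr rfl fun i _ => Finset.sum_congr rfl fun j _ => by ring
  rw [hpt, integral_finset_sum _ (fun i _ => integrable_finset_sum _
    (fun j _ => (aux_I2 μ Γ hGauss i j).const_mul _))]
  refine Finset.sum_congr rfl fun i _ => ?_
  rw [integral_finset_sum _ (fun j _ => (aux_I2 μ Γ hGauss i j).const_mul _)]
  refine Finset.sum_congr rfl fun j _ => ?_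
  rw [integral_const_mul, hcov i j]
  ring

lemma aux_Qnonneg (hcov : ∀ i j, (∫ v, v i * v j ∂μ) = Γ i j)
    (hGauss : ∀ c : Fin m → ℝ,
      μ.map (fun v => ∑ i, c i * v i)
        = gaussianReal 0 (Real.toNNReal (∑ i, ∑ j, c i * Γ i j * c j)))
    (c : Fin m → ℝ) :
    0 ≤ ∑ i, ∑ j, c i * Γ i j * c j := by
  rw [← aux_B μ Γ hcov hGauss c c]
  exact integral_nonneg fun v => mul_self_nonneg _

lemma aux_L4_val (hcov : ∀ i j, (∫ v, v i * v j ∂μ) = Γ i j)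
    (hGauss : ∀ c : Fin m → ℝ,
      μ.map (fun v => ∑ i, c i * v i)
        = gaussianReal 0 (Real.toNNReal (∑ i, ∑ j, c i * Γ i j * c j)))
    (c : Fin m → ℝ) :
    ∫ v, (∑ i, c i * v i) ^ 4 ∂μ = 3 * (∑ i, ∑ j, c i * Γ i j * c j) ^ 2 := by
  have h1 : ∫ v, (∑ i, c i * v i) ^ 4 ∂μ
      = ∫ x, x ^ 4 ∂(μ.map (fun v => ∑ i, c i * v i)) :=
    (integral_map (aux_meas_L c).aemeasurable
      (by exact (measurable_id.pow_const 4).aestronglyMeasurable)).symm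
  rw [h1, hGauss c, aux_gauss_mom4, Real.coe_toNNReal _ (aux_Qnonneg μ Γ hcov hGauss c)]

lemma aux_ISS
    (hcov : ∀ i j, (∫ v, v i * v j ∂μ) = Γ i j)
    (hGauss : ∀ c : Fin m → ℝ,
      μ.map (fun v => ∑ i, c i * v i)
        = gaussianReal 0 (Real.toNNReal (∑ i, ∑ j, c i * Γ i j * c j)))
    (c d : Fin m → ℝ) :
    12 * (∫ v, ((∑ i, c i * v i) * (∑ i, c i * v i))
        * ((∑ i, d i * v i) * (∑ i, d i * v i)) ∂μ)
      = 3 * (∑ i, ∑ j, (c i + d i) * Γ i j * (c j + d j)) ^ 2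
        + 3 * (∑ i, ∑ j, (c i - d i) * Γ i j * (c j - d j)) ^ 2
        - 6 * (∑ i, ∑ j, c i * Γ i j * c j) ^ 2
        - 6 * (∑ i, ∑ j, d i * Γ i j * d j) ^ 2 := by
  have hplus : ∀ v : Fin m → ℝ,
      (∑ i, (c i + d i) * v i) = (∑ i, c i * v i) + (∑ i, d i * v i) := by
    intro v
    rw [← Finset.sum_add_distrib]
    exact Finset.sum_congr rfl fun i _ => by ring
  have hminus : ∀ v : Fin m → ℝ,
      (∑ i, (c i - d i) * v i) = (∑ i, c i * v i) - (∑ i, d i * v i) := by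
    intro v
    rw [← Finset.sum_sub_distrib]
    exact Finset.sum_congr rfl fun i _ => by ring
  have Ic4 := aux_L4_int μ Γ hGauss c
  have Id4 := aux_L4_int μ Γ hGauss d
  have Ip4 := aux_L4_int μ Γ hGauss (fun i => c i + d i)
  have Im4 := aux_L4_int μ Γ hGauss (fun i => c i - d i)
  have hpt : (fun v : Fin m → ℝ => 12 * (((∑ i, c i * v i) * (∑ i, c i * v i))
        * ((∑ i, d i * v i) * (∑ i, d i * v i))))
      = fun v => (∑ i, (c i + d i) * v i) ^ 4 + (∑ i, (c i - d i) * v i) ^ 4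
          - 2 * (∑ i, c i * v i) ^ 4 - 2 * (∑ i, d i * v i) ^ 4 := by
    funext v
    rw [hplus v, hminus v]
    ring
  have hA : Integrable (fun v : Fin m → ℝ => (∑ i, (c i + d i) * v i) ^ 4
      + (∑ i, (c i - d i) * v i) ^ 4) μ := Ip4.add Im4
  have hB : Integrable (fun v : Fin m → ℝ => (∑ i, (c i + d i) * v i) ^ 4
      + (∑ i, (c i - d i) * v i) ^ 4 - 2 * (∑ i, c i * v i) ^ 4) μ := hA.sub (Ic4.const_mul 2)
  rw [← integral_const_mul, hpt,
    integral_sub hB (Id4.const_mul 2),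
    integral_sub hA (Ic4.const_mul 2),
    integral_add Ip4 Im4, integral_const_mul, integral_const_mul,
    aux_L4_val μ Γ hcov hGauss, aux_L4_val μ Γ hcov hGauss,
    aux_L4_val μ Γ hcov hGauss, aux_L4_val μ Γ hcov hGauss]
  ring

lemma aux_M4
    (hcov : ∀ i j, (∫ v, v i * v j ∂μ) = Γ i j)
    (hdiag : ∀ i, Γ i i = 1)
    (hGauss : ∀ c : Fin m → ℝ,
      μ.map (fun v => ∑ i, c i * v i)
        = gaussianReal 0 (Real.toNNReal (∑ i, ∑ j, c i * Γ i j * c j)))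
    (a b c : Fin m) :
    ∫ v, (v a * v a) * (v b * v c) ∂μ = Γ b c + 2 * Γ a b * Γ a c := by
  classical
  set ea : Fin m → ℝ := fun i => if i = a then 1 else 0 with hea
  set dp : Fin m → ℝ := fun i => (if i = b then (1:ℝ) else 0) + (if i = c then 1 else 0)
    with hdp
  set dm : Fin m → ℝ := fun i => (if i = b then (1:ℝ) else 0) - (if i = c then 1 else 0)
    with hdm
  have hev : ∀ v : Fin m → ℝ, (∑ i, ea i * v i) = v a := fun v => aux_sum_delta a v
  have hpv : ∀ v : Fin m → ℝ, (∑ i, dp i * v i) = v b + v c := by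
    intro v
    rw [hdp]
    simp only [add_mul, Finset.sum_add_distrib, aux_sum_delta]
  have hmv : ∀ v : Fin m → ℝ, (∑ i, dm i * v i) = v b - v c := by
    intro v
    rw [hdm]
    simp only [sub_mul, Finset.sum_sub_distrib, aux_sum_delta]
  have h1 := aux_ISS μ Γ hcov hGauss ea dp
  have h2 := aux_ISS μ Γ hcov hGauss ea dm
  have e1 : (fun v : Fin m → ℝ => ((∑ i, ea i * v i) * (∑ i, ea i * v i))
      * ((∑ i, dp i * v i) * (∑ i, dp i * v i)))
      = fun v => (v a * v a) * ((v b + v c) * (v b + v c)) := by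
    funext v; rw [hev v, hpv v]
  have e2 : (fun v : Fin m → ℝ => ((∑ i, ea i * v i) * (∑ i, ea i * v i))
      * ((∑ i, dm i * v i) * (∑ i, dm i * v i)))
      = fun v => (v a * v a) * ((v b - v c) * (v b - v c)) := by
    funext v; rw [hev v, hmv v]
  rw [e1] at h1
  rw [e2] at h2
  simp only [hea, hdp, hdm, add_mul, mul_add, sub_mul, mul_sub, ite_mul, mul_ite,
    one_mul, mul_one, zero_mul, mul_zero, Finset.sum_add_distrib, Finset.sum_sub_distrib,
    Finset.sum_ite_eq', Finset.mem_univ, if_true] at h1 h2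
  have hcb : ∫ v, v a * v a * (v c * v b) ∂μ = ∫ v, v a * v a * (v b * v c) ∂μ := by
    rw [show (fun v : Fin m → ℝ => v a * v a * (v c * v b))
      = fun v => v a * v a * (v b * v c) from funext fun v => by ring]
  have Ibb := aux_I4 μ Γ hGauss a a b b
  have Icb := aux_I4 μ Γ hGauss a a c b
  have Ibc := aux_I4 μ Γ hGauss a a b c
  have Icc := aux_I4 μ Γ hGauss a a c c
  have hAB : Integrable (fun v : Fin m → ℝ => v a * v a * (v b * v b)
      + v a * v a * (v c * v b)) μ := Ibb.add Icb
  have hCD : Integrable (fun v : Fin m → ℝ => v a * v a * (v b * v c)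
      + v a * v a * (v c * v c)) μ := Ibc.add Icc
  have hABm : Integrable (fun v : Fin m → ℝ => v a * v a * (v b * v b)
      - v a * v a * (v c * v b)) μ := Ibb.sub Icb
  have hCDm : Integrable (fun v : Fin m → ℝ => v a * v a * (v b * v c)
      - v a * v a * (v c * v c)) μ := Ibc.sub Icc
  rw [integral_add hAB hCD, integral_add Ibb Icb, integral_add Ibc Icc, hcb] at h1
  rw [integral_sub hABm hCDm, integral_sub Ibb Icb, integral_sub Ibc Icc, hcb] at h2
  rw [hdiag a, hdiag b, hdiag c, aux_symm μ Γ hcov b a, aux_symm μ Γ hcov c a,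
    aux_symm μ Γ hcov c b] at h1 h2
  linear_combination h1 / 48 - h2 / 48

end AuxProb

section Sums

variable {m : ℕ} (Γ : Matrix (Fin m) (Fin m) ℝ) (p : Fin m → ℝ) (ℓ : ℝ)

lemma aux_swap12 (F : Fin m → Fin m → Fin m → Fin m → ℝ) :
    (∑ i, ∑ j, ∑ i', ∑ j', F i j i' j') = ∑ i, ∑ j, ∑ i', ∑ j', F j i i' j' :=
  Finset.sum_comm

lemma aux_swapblock (F : Fin m → Fin m → Fin m → Fin m → ℝ) :
    (∑ i, ∑ j, ∑ i', ∑ j', F i j i' j') = ∑ i, ∑ j, ∑ i', ∑ j', F i' j' i j := by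
  calc (∑ i, ∑ j, ∑ i', ∑ j', F i j i' j')
      = ∑ p : Fin m × Fin m, ∑ i', ∑ j', F p.1 p.2 i' j' :=
        (Fintype.sum_prod_type (f := fun p : Fin m × Fin m => ∑ i', ∑ j', F p.1 p.2 i' j')).symm
    _ = ∑ p : Fin m × Fin m, ∑ q : Fin m × Fin m, F p.1 p.2 q.1 q.2 :=
        Finset.sum_congr rfl fun p _ =>
          (Fintype.sum_prod_type (f := fun q : Fin m × Fin m => F p.1 p.2 q.1 q.2)).symm
    _ = ∑ q : Fin m × Fin m, ∑ p : Fin m × Fin m, F p.1 p.2 q.1 q.2 := Finset.sum_comm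
    _ = ∑ q : Fin m × Fin m, ∑ i, ∑ j, F i j q.1 q.2 :=
        Finset.sum_congr rfl fun q _ =>
          Fintype.sum_prod_type (f := fun p : Fin m × Fin m => F p.1 p.2 q.1 q.2)
    _ = ∑ i', ∑ j', ∑ i, ∑ j, F i j i' j' :=
        Fintype.sum_prod_type (f := fun q : Fin m × Fin m => ∑ i, ∑ j, F i j q.1 q.2)

lemma aux_congr4 {F G : Fin m → Fin m → Fin m → Fin m → ℝ}
    (h : ∀ i j i' j', F i j i' j' = G i j i' j') :
    (∑ i, ∑ j, ∑ i', ∑ j', F i j i' j') = ∑ i, ∑ j, ∑ i', ∑ j', G i j i' j' :=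
  Finset.sum_congr rfl fun i _ => Finset.sum_congr rfl fun j _ =>
    Finset.sum_congr rfl fun i' _ => Finset.sum_congr rfl fun j' _ => h i j i' j'

lemma aux_TA (hE : ∀ i, (∑ j, Γ i j * p j) = ℓ * p i) :
    (∑ i, ∑ j, ∑ i', ∑ j', p i * p j * p i' * p j' * (Γ i j * (Γ i i' * Γ i j')))
      = ℓ ^ 3 * ∑ i, (p i) ^ 4 := by
  have step1 : ∀ i j i',
      (∑ j', p i * p j * p i' * p j' * (Γ i j * (Γ i i' * Γ i j')))
        = (p i * p j * p i' * (Γ i j * Γ i i')) * (ℓ * p i) := by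
    intro i j i'
    rw [show (∑ j', p i * p j * p i' * p j' * (Γ i j * (Γ i i' * Γ i j')))
        = ∑ j', (p i * p j * p i' * (Γ i j * Γ i i')) * (Γ i j' * p j') from
      Finset.sum_congr rfl fun j' _ => by ring, ← Finset.mul_sum, hE i]
  have step2 : ∀ i j,
      (∑ i', (p i * p j * p i' * (Γ i j * Γ i i')) * (ℓ * p i))
        = (p i * p j * Γ i j * (ℓ * p i)) * (ℓ * p i) := by
    intro i j
    rw [show (∑ i', (p i * p j * p i' * (Γ i j * Γ i i')) * (ℓ * p i))
        = ∑ i', (p i * p j * Γ i j * (ℓ * p i)) * (Γ i i' * p i') from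
      Finset.sum_congr rfl fun i' _ => by ring, ← Finset.mul_sum, hE i]
  have step3 : ∀ i,
      (∑ j, (p i * p j * Γ i j * (ℓ * p i)) * (ℓ * p i))
        = (p i * (ℓ * p i) * (ℓ * p i)) * (ℓ * p i) := by
    intro i
    rw [show (∑ j, (p i * p j * Γ i j * (ℓ * p i)) * (ℓ * p i))
        = ∑ j, (p i * (ℓ * p i) * (ℓ * p i)) * (Γ i j * p j) from
      Finset.sum_congr rfl fun j _ => by ring, ← Finset.mul_sum, hE i]
  calc (∑ i, ∑ j, ∑ i', ∑ j', p i * p j * p i' * p j' * (Γ i j * (Γ i i' * Γ i j')))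
      = ∑ i, ∑ j, ∑ i', (p i * p j * p i' * (Γ i j * Γ i i')) * (ℓ * p i) :=
        Finset.sum_congr rfl fun i _ => Finset.sum_congr rfl fun j _ =>
          Finset.sum_congr rfl fun i' _ => step1 i j i'
    _ = ∑ i, ∑ j, (p i * p j * Γ i j * (ℓ * p i)) * (ℓ * p i) :=
        Finset.sum_congr rfl fun i _ => Finset.sum_congr rfl fun j _ => step2 i j
    _ = ∑ i, (p i * (ℓ * p i) * (ℓ * p i)) * (ℓ * p i) :=
        Finset.sum_congr rfl fun i _ => step3 i
    _ = ℓ ^ 3 * ∑ i, (p i) ^ 4 := by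
        rw [Finset.mul_sum]
        exact Finset.sum_congr rfl fun i _ => by ring

lemma aux_U1 (hE : ∀ i, (∑ j, Γ i j * p j) = ℓ * p i) :
    (∑ i, ∑ j, ∑ i', ∑ j', p i * p j * p i' * p j' * (Γ i j * Γ i' j' * (Γ i i') ^ 2))
      = ℓ ^ 2 * ∑ i, ∑ i', (p i) ^ 2 * (p i') ^ 2 * (Γ i i') ^ 2 := by
  have step1 : ∀ i j i',
      (∑ j', p i * p j * p i' * p j' * (Γ i j * Γ i' j' * (Γ i i') ^ 2))
        = (p i * p j * p i' * (Γ i j * (Γ i i') ^ 2)) * (ℓ * p i') := by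
    intro i j i'
    rw [show (∑ j', p i * p j * p i' * p j' * (Γ i j * Γ i' j' * (Γ i i') ^ 2))
        = ∑ j', (p i * p j * p i' * (Γ i j * (Γ i i') ^ 2)) * (Γ i' j' * p j') from
      Finset.sum_congr rfl fun j' _ => by ring, ← Finset.mul_sum, hE i']
  have step2 : ∀ i,
      (∑ j, ∑ i', (p i * p j * p i' * (Γ i j * (Γ i i') ^ 2)) * (ℓ * p i'))
        = (ℓ * p i) * (∑ i', (p i * p i' * (Γ i i') ^ 2) * (ℓ * p i')) := by
    intro i
    rw [show (∑ j, ∑ i', (p i * p j * p i' * (Γ i j * (Γ i i') ^ 2)) * (ℓ * p i'))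
        = ∑ j, ∑ i', (Γ i j * p j) * ((p i * p i' * (Γ i i') ^ 2) * (ℓ * p i')) from
      Finset.sum_congr rfl fun j _ => Finset.sum_congr rfl fun i' _ => by ring,
      ← Finset.sum_mul_sum, hE i]
  calc (∑ i, ∑ j, ∑ i', ∑ j', p i * p j * p i' * p j' * (Γ i j * Γ i' j' * (Γ i i') ^ 2))
      = ∑ i, ∑ j, ∑ i', (p i * p j * p i' * (Γ i j * (Γ i i') ^ 2)) * (ℓ * p i') :=
        Finset.sum_congr rfl fun i _ => Finset.sum_congr rfl fun j _ =>
          Finset.sum_congr rfl fun i' _ => step1 i j i'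
    _ = ∑ i, (ℓ * p i) * (∑ i', (p i * p i' * (Γ i i') ^ 2) * (ℓ * p i')) :=
        Finset.sum_congr rfl fun i _ => step2 i
    _ = ℓ ^ 2 * ∑ i, ∑ i', (p i) ^ 2 * (p i') ^ 2 * (Γ i i') ^ 2 := by
        rw [Finset.mul_sum]
        refine Finset.sum_congr rfl fun i _ => ?_
        rw [Finset.mul_sum, Finset.mul_sum]
        exact Finset.sum_congr rfl fun i' _ => by ring

lemma aux_U2 (hE : ∀ i, (∑ j, Γ i j * p j) = ℓ * p i)
    (hE' : ∀ j, (∑ i, Γ i j * p i) = ℓ * p j) :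
    (∑ i, ∑ j, ∑ i', ∑ j', p i * p j * p i' * p j' * (Γ i j * Γ i' j' * (Γ i j') ^ 2))
      = ℓ ^ 2 * ∑ i, ∑ i', (p i) ^ 2 * (p i') ^ 2 * (Γ i i') ^ 2 := by
  have hsw : (∑ i, ∑ j, ∑ i', ∑ j', p i * p j * p i' * p j' * (Γ i j * Γ i' j' * (Γ i j') ^ 2))
      = ∑ i, ∑ j, ∑ j', ∑ i', p i * p j * p i' * p j' * (Γ i j * Γ i' j' * (Γ i j') ^ 2) :=
    Finset.sum_congr rfl fun i _ => Finset.sum_congr rfl fun j _ => Finset.sum_comm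
  rw [hsw]
  have step1 : ∀ i j j',
      (∑ i', p i * p j * p i' * p j' * (Γ i j * Γ i' j' * (Γ i j') ^ 2))
        = (p i * p j * p j' * (Γ i j * (Γ i j') ^ 2)) * (ℓ * p j') := by
    intro i j j'
    rw [show (∑ i', p i * p j * p i' * p j' * (Γ i j * Γ i' j' * (Γ i j') ^ 2))
        = ∑ i', (p i * p j * p j' * (Γ i j * (Γ i j') ^ 2)) * (Γ i' j' * p i') from
      Finset.sum_congr rfl fun i' _ => by ring, ← Finset.mul_sum, hE' j']
  have step2 : ∀ i,
      (∑ j, ∑ j', (p i * p j * p j' * (Γ i j * (Γ i j') ^ 2)) * (ℓ * p j'))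
        = (ℓ * p i) * (∑ j', (p i * p j' * (Γ i j') ^ 2) * (ℓ * p j')) := by
    intro i
    rw [show (∑ j, ∑ j', (p i * p j * p j' * (Γ i j * (Γ i j') ^ 2)) * (ℓ * p j'))
        = ∑ j, ∑ j', (Γ i j * p j) * ((p i * p j' * (Γ i j') ^ 2) * (ℓ * p j')) from
      Finset.sum_congr rfl fun j _ => Finset.sum_congr rfl fun j' _ => by ring,
      ← Finset.sum_mul_sum, hE i]
  calc (∑ i, ∑ j, ∑ j', ∑ i', p i * p j * p i' * p j' * (Γ i j * Γ i' j' * (Γ i j') ^ 2))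
      = ∑ i, ∑ j, ∑ j', (p i * p j * p j' * (Γ i j * (Γ i j') ^ 2)) * (ℓ * p j') :=
        Finset.sum_congr rfl fun i _ => Finset.sum_congr rfl fun j _ =>
          Finset.sum_congr rfl fun j' _ => step1 i j j'
    _ = ∑ i, (ℓ * p i) * (∑ j', (p i * p j' * (Γ i j') ^ 2) * (ℓ * p j')) :=
        Finset.sum_congr rfl fun i _ => step2 i
    _ = ℓ ^ 2 * ∑ i, ∑ i', (p i) ^ 2 * (p i') ^ 2 * (Γ i i') ^ 2 := by
        rw [Finset.mul_sum]
        refine Finset.sum_congr rfl fun i _ => ?_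
        rw [Finset.mul_sum, Finset.mul_sum]
        exact Finset.sum_congr rfl fun i' _ => by ring

lemma aux_trace2 : Matrix.trace (Matrix.diagonal p ^ 4) = ∑ i, (p i) ^ 4 := by
  rw [Matrix.diagonal_pow, Matrix.trace_diagonal]
  exact Finset.sum_congr rfl fun i _ => rfl

lemma aux_trace1 (hsymm : ∀ a b, Γ a b = Γ b a) :
    Matrix.trace ((Matrix.diagonal p * Γ * Matrix.diagonal p) ^ 2)
      = ∑ i, ∑ i', (p i) ^ 2 * (p i') ^ 2 * (Γ i i') ^ 2 := by
  rw [sq, Matrix.trace]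
  simp only [Matrix.diag_apply, Matrix.mul_apply, Matrix.diagonal_apply, ite_mul, mul_ite,
    zero_mul, mul_zero, Finset.sum_ite_eq, Finset.sum_ite_eq', Finset.mem_univ, if_true]
  refine Finset.sum_congr rfl fun i _ => Finset.sum_congr rfl fun i' _ => ?_
  rw [hsymm i' i]
  ring

end Sums


open MeasureTheory ProbabilityTheory Matrix

/-- **Gaussian evaluation of the correlation-specific cumulant contractions**
(Appendix A.1): let `ξ̄` be a centered Gaussian vector with unit variances and correlation
matrix `Γ = (κ_{ij})`, and `p_ν` a unit eigenvector of `Γ` with eigenvalue `ℓ_ν`. With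
`ψ_{ij} = κ_{ij} (ξ̄_i² + ξ̄_j²)/2`, `χ_{ij} = ξ̄_i ξ̄_j`,
`κ̌₁_{iji'j'} = Cov(ψ_{ij}, ψ_{i'j'})`, `κ̌₂_{iji'j'} = Cov(ψ_{ij}, χ_{i'j'})` and
`κ̌ = κ̌₁ - 2κ̌₂` (after contraction), one has
`[𝒫^ν, κ̌₁] = 2 ℓ_ν² tr (P_{D,ν} Γ P_{D,ν})²`, `[𝒫^ν, κ̌₂] = 2 ℓ_ν³ tr P_{D,ν}⁴` and hence
`[𝒫^ν, κ̌] = 2 ℓ_ν² tr (P_{D,ν} Γ P_{D,ν})² - 4 ℓ_ν³ tr P_{D,ν}⁴`. -/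
theorem gaussian_kappa_check_contractions
    {m : ℕ} (μ : Measure (Fin m → ℝ)) [IsProbabilityMeasure μ]
    (Γ : Matrix (Fin m) (Fin m) ℝ)
    (hcov : ∀ i j, (∫ v, v i * v j ∂μ) = Γ i j)
    (hdiag : ∀ i, Γ i i = 1)
    (hGauss : ∀ c : Fin m → ℝ,
      μ.map (fun v => ∑ i, c i * v i)
        = gaussianReal 0 (Real.toNNReal (∑ i, ∑ j, c i * Γ i j * c j)))
    (pν : Fin m → ℝ) (ℓν : ℝ)
    (hunit : ∑ i, (pν i) ^ 2 = 1)
    (heig : Γ.mulVec pν = ℓν • pν) :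
    -- with the following abbreviations:
    ∀ ψ χ : Fin m → Fin m → (Fin m → ℝ) → ℝ,
      (∀ i j v, ψ i j v = Γ i j * ((v i) ^ 2 + (v j) ^ 2) / 2) →
      (∀ i j v, χ i j v = v i * v j) →
    ∀ cov : ((Fin m → ℝ) → ℝ) → ((Fin m → ℝ) → ℝ) → ℝ,
      (∀ f g, cov f g = (∫ v, f v * g v ∂μ) - (∫ v, f v ∂μ) * (∫ v, g v ∂μ)) →
    ∀ br : (Fin m → Fin m → Fin m → Fin m → ℝ) → ℝ,
      (∀ A, br A = ∑ i, ∑ j, ∑ i', ∑ j', pν i * pν j * pν i' * pν j' * A i j i' j') →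
      (br (fun i j i' j' => cov (ψ i j) (ψ i' j'))
          = 2 * ℓν ^ 2 *
            Matrix.trace ((Matrix.diagonal pν * Γ * Matrix.diagonal pν) ^ 2)) ∧
      (br (fun i j i' j' => cov (ψ i j) (χ i' j'))
          = 2 * ℓν ^ 3 * Matrix.trace (Matrix.diagonal pν ^ 4)) ∧
      (br (fun i j i' j' =>
            cov (ψ i j) (ψ i' j') - cov (ψ i j) (χ i' j') - cov (χ i j) (ψ i' j'))
          = 2 * ℓν ^ 2 *
              Matrix.trace ((Matrix.diagonal pν * Γ * Matrix.diagonal pν) ^ 2)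
            - 4 * ℓν ^ 3 * Matrix.trace (Matrix.diagonal pν ^ 4)) := by
  intro ψ χ hψ hχ cov hcovdef br hbr
  classical
  have hsymm : ∀ a b, Γ a b = Γ b a := aux_symm μ Γ hcov
  have hE : ∀ i, (∑ j, Γ i j * pν j) = ℓν * pν i := by
    intro i
    have h := congrFun heig i
    simpa [Matrix.mulVec, dotProduct] using h
  have hE' : ∀ j, (∑ i, Γ i j * pν i) = ℓν * pν j := by
    intro j
    calc (∑ i, Γ i j * pν i) = ∑ i, Γ j i * pν i :=
          Finset.sum_congr rfl fun i _ => by rw [hsymm i j]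
      _ = ℓν * pν j := hE j
  -- expectations
  have Eψ : ∀ a b, (∫ v, ψ a b v ∂μ) = Γ a b := by
    intro a b
    have hfun : (fun v : Fin m → ℝ => ψ a b v)
        = fun v => (Γ a b / 2) * (v a * v a) + (Γ a b / 2) * (v b * v b) :=
      funext fun v => by rw [hψ]; ring
    rw [hfun, integral_add ((aux_I2 μ Γ hGauss a a).const_mul _)
      ((aux_I2 μ Γ hGauss b b).const_mul _), integral_const_mul, integral_const_mul,
      hcov, hcov, hdiag a, hdiag b]
    ring
  have Eχ : ∀ a b, (∫ v, χ a b v ∂μ) = Γ a b := by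
    intro a b
    rw [show (fun v : Fin m → ℝ => χ a b v) = fun v => v a * v b from
      funext fun v => hχ a b v]
    exact hcov a b
  have Eψψ : ∀ i j i' j', (∫ v, ψ i j v * ψ i' j' v ∂μ)
      = Γ i j * Γ i' j' / 4 * ((Γ i' i' + 2 * Γ i i' * Γ i i')
        + (Γ j' j' + 2 * Γ i j' * Γ i j') + (Γ i' i' + 2 * Γ j i' * Γ j i')
        + (Γ j' j' + 2 * Γ j j' * Γ j j')) := by
    intro i j i' j'
    have hfun : (fun v : Fin m → ℝ => ψ i j v * ψ i' j' v)
        = fun v => (Γ i j * Γ i' j' / 4) * ((v i * v i) * (v i' * v i'))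
            + (Γ i j * Γ i' j' / 4) * ((v i * v i) * (v j' * v j'))
            + (Γ i j * Γ i' j' / 4) * ((v j * v j) * (v i' * v i'))
            + (Γ i j * Γ i' j' / 4) * ((v j * v j) * (v j' * v j')) :=
      funext fun v => by rw [hψ, hψ]; ring
    have I1 := (aux_I4 μ Γ hGauss i i i' i').const_mul (Γ i j * Γ i' j' / 4)
    have I2 := (aux_I4 μ Γ hGauss i i j' j').const_mul (Γ i j * Γ i' j' / 4)
    have I3 := (aux_I4 μ Γ hGauss j j i' i').const_mul (Γ i j * Γ i' j' / 4)
    have I4 := (aux_I4 μ Γ hGauss j j j' j').const_mul (Γ i j * Γ i' j' / 4)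
    have h12 : Integrable (fun v : Fin m → ℝ =>
        (Γ i j * Γ i' j' / 4) * ((v i * v i) * (v i' * v i'))
          + (Γ i j * Γ i' j' / 4) * ((v i * v i) * (v j' * v j'))) μ := I1.add I2
    have h123 : Integrable (fun v : Fin m → ℝ =>
        (Γ i j * Γ i' j' / 4) * ((v i * v i) * (v i' * v i'))
          + (Γ i j * Γ i' j' / 4) * ((v i * v i) * (v j' * v j'))
          + (Γ i j * Γ i' j' / 4) * ((v j * v j) * (v i' * v i'))) μ := h12.add I3
    rw [hfun, integral_add h123 I4, integral_add h12 I3, integral_add I1 I2,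
      integral_const_mul, integral_const_mul, integral_const_mul, integral_const_mul,
      aux_M4 μ Γ hcov hdiag hGauss i i' i', aux_M4 μ Γ hcov hdiag hGauss i j' j',
      aux_M4 μ Γ hcov hdiag hGauss j i' i', aux_M4 μ Γ hcov hdiag hGauss j j' j']
    ring
  have Eψχ : ∀ i j i' j', (∫ v, ψ i j v * χ i' j' v ∂μ)
      = Γ i j / 2 * ((Γ i' j' + 2 * Γ i i' * Γ i j') + (Γ i' j' + 2 * Γ j i' * Γ j j')) := by
    intro i j i' j'
    have hfun : (fun v : Fin m → ℝ => ψ i j v * χ i' j' v)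
        = fun v => (Γ i j / 2) * ((v i * v i) * (v i' * v j'))
            + (Γ i j / 2) * ((v j * v j) * (v i' * v j')) :=
      funext fun v => by rw [hψ, hχ]; ring
    have I1 := (aux_I4 μ Γ hGauss i i i' j').const_mul (Γ i j / 2)
    have I2 := (aux_I4 μ Γ hGauss j j i' j').const_mul (Γ i j / 2)
    rw [hfun, integral_add I1 I2, integral_const_mul, integral_const_mul,
      aux_M4 μ Γ hcov hdiag hGauss i i' j', aux_M4 μ Γ hcov hdiag hGauss j i' j']
    ring
  have covsym : ∀ f g : (Fin m → ℝ) → ℝ, cov f g = cov g f := by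
    intro f g
    rw [hcovdef, hcovdef, show (fun v : Fin m → ℝ => f v * g v) = fun v => g v * f v from
      funext fun v => mul_comm _ _]
    ring
  -- the three contracted sums
  have SB1 : (∑ i, ∑ j, ∑ i', ∑ j',
        pν i * pν j * pν i' * pν j' * cov (ψ i j) (ψ i' j'))
      = 2 * ℓν ^ 2 * ∑ i, ∑ i', (pν i) ^ 2 * (pν i') ^ 2 * (Γ i i') ^ 2 := by
    have hpt : ∀ i j i' j', pν i * pν j * pν i' * pν j' * cov (ψ i j) (ψ i' j')
        = 2⁻¹ * (pν i * pν j * pν i' * pν j' * (Γ i j * Γ i' j' * (Γ i i') ^ 2))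
          + 2⁻¹ * (pν i * pν j * pν i' * pν j' * (Γ i j * Γ i' j' * (Γ i j') ^ 2))
          + 2⁻¹ * (pν i * pν j * pν i' * pν j' * (Γ i j * Γ i' j' * (Γ j i') ^ 2))
          + 2⁻¹ * (pν i * pν j * pν i' * pν j' * (Γ i j * Γ i' j' * (Γ j j') ^ 2)) := by
      intro i j i' j'
      rw [hcovdef, Eψψ i j i' j', Eψ i j, Eψ i' j', hdiag i', hdiag j']
      ring
    rw [aux_congr4 hpt]
    simp only [Finset.sum_add_distrib]
    simp only [← Finset.mul_sum]
    have hU3 : (∑ i, ∑ j, ∑ i', ∑ j',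
          pν i * pν j * pν i' * pν j' * (Γ i j * Γ i' j' * (Γ j i') ^ 2))
        = ℓν ^ 2 * ∑ i, ∑ i', (pν i) ^ 2 * (pν i') ^ 2 * (Γ i i') ^ 2 := by
      rw [aux_swap12 (fun i j i' j' =>
        pν i * pν j * pν i' * pν j' * (Γ i j * Γ i' j' * (Γ j i') ^ 2))]
      rw [aux_congr4 (fun i j i' j' => by
        rw [hsymm j i]
        ring_nf : ∀ i j i' j',
          pν j * pν i * pν i' * pν j' * (Γ j i * Γ i' j' * (Γ i i') ^ 2)
            = pν i * pν j * pν i' * pν j' * (Γ i j * Γ i' j' * (Γ i i') ^ 2))]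
      exact aux_U1 Γ pν ℓν hE
    have hU4 : (∑ i, ∑ j, ∑ i', ∑ j',
          pν i * pν j * pν i' * pν j' * (Γ i j * Γ i' j' * (Γ j j') ^ 2))
        = ℓν ^ 2 * ∑ i, ∑ i', (pν i) ^ 2 * (pν i') ^ 2 * (Γ i i') ^ 2 := by
      rw [aux_swap12 (fun i j i' j' =>
        pν i * pν j * pν i' * pν j' * (Γ i j * Γ i' j' * (Γ j j') ^ 2))]
      rw [aux_congr4 (fun i j i' j' => by
        rw [hsymm j i]
        ring_nf : ∀ i j i' j',
          pν j * pν i * pν i' * pν j' * (Γ j i * Γ i' j' * (Γ i j') ^ 2)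
            = pν i * pν j * pν i' * pν j' * (Γ i j * Γ i' j' * (Γ i j') ^ 2))]
      exact aux_U2 Γ pν ℓν hE hE'
    rw [aux_U1 Γ pν ℓν hE, aux_U2 Γ pν ℓν hE hE', hU3, hU4]
    ring
  have SB2 : (∑ i, ∑ j, ∑ i', ∑ j',
        pν i * pν j * pν i' * pν j' * cov (ψ i j) (χ i' j'))
      = 2 * ℓν ^ 3 * ∑ i, (pν i) ^ 4 := by
    have hpt : ∀ i j i' j', pν i * pν j * pν i' * pν j' * cov (ψ i j) (χ i' j')
        = pν i * pν j * pν i' * pν j' * (Γ i j * (Γ i i' * Γ i j'))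
          + pν i * pν j * pν i' * pν j' * (Γ i j * (Γ j i' * Γ j j')) := by
      intro i j i' j'
      rw [hcovdef, Eψχ i j i' j', Eψ i j, Eχ i' j']
      ring
    rw [aux_congr4 hpt]
    simp only [Finset.sum_add_distrib]
    have hTB : (∑ i, ∑ j, ∑ i', ∑ j',
          pν i * pν j * pν i' * pν j' * (Γ i j * (Γ j i' * Γ j j')))
        = ℓν ^ 3 * ∑ i, (pν i) ^ 4 := by
      rw [aux_swap12 (fun i j i' j' =>
        pν i * pν j * pν i' * pν j' * (Γ i j * (Γ j i' * Γ j j')))]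
      rw [aux_congr4 (fun i j i' j' => by
        rw [hsymm j i]
        ring_nf : ∀ i j i' j',
          pν j * pν i * pν i' * pν j' * (Γ j i * (Γ i i' * Γ i j'))
            = pν i * pν j * pν i' * pν j' * (Γ i j * (Γ i i' * Γ i j')))]
      exact aux_TA Γ pν ℓν hE
    rw [aux_TA Γ pν ℓν hE, hTB]
    ring
  have SB3 : (∑ i, ∑ j, ∑ i', ∑ j',
        pν i * pν j * pν i' * pν j' * cov (χ i j) (ψ i' j'))
      = 2 * ℓν ^ 3 * ∑ i, (pν i) ^ 4 := by
    rw [aux_swapblock (fun i j i' j' =>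
      pν i * pν j * pν i' * pν j' * cov (χ i j) (ψ i' j'))]
    rw [aux_congr4 (fun i j i' j' => by
      rw [covsym (χ i' j') (ψ i j)]
      ring_nf : ∀ i j i' j',
        pν i' * pν j' * pν i * pν j * cov (χ i' j') (ψ i j)
          = pν i * pν j * pν i' * pν j' * cov (ψ i j) (χ i' j'))]
    exact SB2
  refine ⟨?_, ?_, ?_⟩
  · rw [hbr, aux_trace1 Γ pν hsymm, SB1]
  · rw [hbr, aux_trace2 pν, SB2]
  · rw [hbr, aux_trace1 Γ pν hsymm, aux_trace2 pν]
    rw [aux_congr4 (fun i j i' j' => by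
      ring_nf : ∀ i j i' j',
        pν i * pν j * pν i' * pν j'
            * (cov (ψ i j) (ψ i' j') - cov (ψ i j) (χ i' j') - cov (χ i j) (ψ i' j'))
          = pν i * pν j * pν i' * pν j' * cov (ψ i j) (ψ i' j')
            - pν i * pν j * pν i' * pν j' * cov (ψ i j) (χ i' j')
            - pν i * pν j * pν i' * pν j' * cov (χ i j) (ψ i' j'))]
    simp only [Finset.sum_sub_distrib]
    rw [SB1, SB2, SB3]
    ring
end
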